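/- Let κ > 0, k ∈ ℝ² with |k| = κ, let θ be a unit vector, let n ∈ ℕ, and let f₀, f₁, …, f_{n+1} ∈ ℂ. Let ψ₁ : (0,∞) → ℂ satisfy ψ₁(s) − √(2/(πκ s)) e^{i(κs − π/4)} Σ_{j=0}^{n+1} f_j s^{−j} = O(s^{−n − 5/2}) as s → ∞. Define ψ_{1,n}(s) = √(2/(πκ s)) e^{i(κs − π/4)} Σ_{j=0}^{n} f_j s^{−j}, a(s) = √s ( |e^{i s (k·θ)} + ψ₁(s)|² − 1 ), a_n(s) = √s ( |e^{i s (k·θ)} + ψ_{1,n}(s)|² − 1 ), and b_n(s) = s^{n+1} ( a(s) − a_n(s) ). Then b_n(s) − √(2/(πκ)) ( e^{i(κs − π/4 − s(k·θ))} f_{n+1} + e^{−i(κs − π/4 − s(k·θ))} \overline{f_{n+1}} ) = O(s^{−1/2}) as s → ∞. -/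

import Mathlib

open Complex Filter Asymptotics RealInnerProductSpace

noncomputable section

/-- The plane ℝ². -/
abbrev E2 := EuclideanSpace ℝ (Fin 2)

/-- The leading oscillatory term `√(2/(πκ)) (e^{i(κs − s k·θ − π/4)} f₀ + e^{−i(κs − s k·θ − π/4)} f̄₀)`
of the normalized intensity deviation. -/
def oscTerm (κ kθ : ℝ) (f₀ : ℂ) (s : ℝ) : ℂ :=
  (Real.sqrt (2 / (Real.pi * κ)) : ℂ) *
    (Complex.exp (Complex.I * ((κ * s - s * kθ - Real.pi / 4 : ℝ) : ℂ)) * f₀ +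
      Complex.exp (-(Complex.I * ((κ * s - s * kθ - Real.pi / 4 : ℝ) : ℂ))) * (starRingEnd ℂ) f₀)

/-- The truncated far-field expansion
`ψ_{1,n}(s) = √(2/(πκs)) e^{i(κs − π/4)} Σ_{j=0}^{n} f_j s^{−j}`. -/
def partialFar (κ : ℝ) (f : ℕ → ℂ) (n : ℕ) (s : ℝ) : ℂ :=
  (Real.sqrt (2 / (Real.pi * κ * s)) : ℂ) *
    Complex.exp (Complex.I * ((κ * s - Real.pi / 4 : ℝ) : ℂ)) *
    ∑ j ∈ Finset.range (n + 1), f j / (s : ℂ) ^ j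

/-- The normalized intensity deviation `a(s) = √s (|e^{is k·θ} + ψ(s)|² − 1)` along the ray. -/
def intensityDev (kθ : ℝ) (ψ : ℝ → ℂ) (s : ℝ) : ℂ :=
  ((Real.sqrt s *
      (‖Complex.exp (Complex.I * ((s * kθ : ℝ) : ℂ)) + ψ s‖ ^ 2 - 1) : ℝ) : ℂ)

/-! ### Auxiliary definitions and lemmas -/

/-- The tail of the truncated far-field expansion. -/
def tailF (κ : ℝ) (f : ℕ → ℂ) (n : ℕ) (s : ℝ) : ℂ :=
  partialFar κ f (n+1) s - partialFar κ f n s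

/-- The incident plane wave along the ray. -/
def uu (c s : ℝ) : ℂ := Complex.exp (Complex.I * ((s * c : ℝ) : ℂ))

/-- The remainder in the intensity-difference expansion. -/
def remF (κ c : ℝ) (f : ℕ → ℂ) (n : ℕ) (ψ₁ : ℝ → ℂ) (s : ℝ) : ℝ :=
  2*(uu c s * (starRingEnd ℂ) (ψ₁ s - partialFar κ f (n+1) s)).re
  + 2*(partialFar κ f (n+1) s * (starRingEnd ℂ) (ψ₁ s - partialFar κ f (n+1) s)).re
  + Complex.normSq (ψ₁ s - partialFar κ f (n+1) s)
  + Complex.normSq (tailF κ f n s)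
  + 2*(partialFar κ f n s * (starRingEnd ℂ) (tailF κ f n s)).re

lemma key_normSq (u b t r : ℂ) :
    Complex.normSq (u + (b + t + r)) - Complex.normSq (u + b) =
      2*(u * (starRingEnd ℂ) t).re + (2*(u * (starRingEnd ℂ) r).re
        + 2*((b + t) * (starRingEnd ℂ) r).re + Complex.normSq r + Complex.normSq t
        + 2*(b * (starRingEnd ℂ) t).re) := by
  simp only [Complex.normSq_apply, Complex.mul_re, Complex.add_re, Complex.add_im,
    Complex.conj_re, Complex.conj_im]
  ring

lemma rpow_isBigO_rpow {a b : ℝ} (hab : a ≤ b) :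
    (fun s : ℝ => s ^ a) =O[atTop] fun s : ℝ => s ^ b := by
  apply IsBigO.of_bound 1
  filter_upwards [eventually_ge_atTop 1] with s hs
  rw [one_mul, Real.norm_eq_abs, Real.norm_eq_abs,
    _root_.abs_of_nonneg (Real.rpow_nonneg (by linarith) _),
    _root_.abs_of_nonneg (Real.rpow_nonneg (by linarith) _)]
  exact Real.rpow_le_rpow_of_exponent_le hs hab

lemma rpow_mul_ev (a b : ℝ) :
    (fun s : ℝ => s ^ a * s ^ b) =ᶠ[atTop] fun s : ℝ => s ^ (a + b) := by
  filter_upwards [eventually_gt_atTop 0] with s hs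
  rw [Real.rpow_add hs]

lemma aux_bigO (m : ℕ) (g : ℝ → ℝ) (a : ℝ) (hg : g =O[atTop] fun s : ℝ => s ^ a)
    (ha : (m : ℝ) + 1/2 + a ≤ -(1:ℝ)/2) :
    (fun s : ℝ => (s:ℂ) ^ m * ((Real.sqrt s * g s : ℝ) : ℂ)) =O[atTop]
      fun s : ℝ => s ^ (-(1:ℝ)/2) := by
  have h1 : (fun s : ℝ => (s:ℂ) ^ m * (Real.sqrt s : ℂ)) =O[atTop]
      fun s : ℝ => s ^ ((m : ℝ) + 1/2) := by
    apply IsBigO.of_bound 1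
    filter_upwards [eventually_ge_atTop 1] with s hs
    have hs0 : (0:ℝ) < s := by linarith
    rw [one_mul, norm_mul, norm_pow, Complex.norm_real, Real.norm_eq_abs, Real.norm_eq_abs,
      Complex.norm_real, Real.norm_eq_abs, _root_.abs_of_nonneg (Real.sqrt_nonneg _),
      _root_.abs_of_nonneg hs0.le, _root_.abs_of_nonneg (Real.rpow_nonneg hs0.le _),
      Real.rpow_add hs0, Real.rpow_natCast, Real.sqrt_eq_rpow]
  have hg' : (fun s : ℝ => ((g s : ℝ) : ℂ)) =O[atTop] fun s : ℝ => s ^ a := by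
    refine IsBigO.trans ?_ hg
    exact isBigO_of_le _ (fun s => by rw [Complex.norm_real])
  have := (h1.mul hg').trans ((rpow_mul_ev _ _).trans_isBigO (rpow_isBigO_rpow ha))
  refine this.congr_left fun s => ?_
  push_cast
  ring

lemma sqrt_coeff (κ : ℝ) (hκ : 0 < κ) (s : ℝ) :
    Real.sqrt (2 / (Real.pi * κ * s)) = Real.sqrt (2 / (Real.pi * κ)) / Real.sqrt s := by
  rw [← Real.sqrt_div (by positivity), div_div]

lemma norm_exp_I_real (x : ℝ) : ‖Complex.exp (Complex.I * (x : ℂ))‖ = 1 := by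
  rw [Complex.norm_exp]
  simp [Complex.mul_re]

lemma partialFar_norm_le (κ : ℝ) (hκ : 0 < κ) (f : ℕ → ℂ) (m : ℕ) {s : ℝ} (hs : 1 ≤ s) :
    ‖partialFar κ f m s‖ ≤
      (Real.sqrt (2/(Real.pi*κ)) * ∑ j ∈ Finset.range (m+1), ‖f j‖) * s ^ (-(1:ℝ)/2) := by
  have hs0 : (0:ℝ) < s := by linarith
  have h1 : ‖∑ j ∈ Finset.range (m+1), f j / (s : ℂ) ^ j‖ ≤
      ∑ j ∈ Finset.range (m+1), ‖f j‖ := by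
    refine (norm_sum_le _ _).trans (Finset.sum_le_sum fun j _ => ?_)
    rw [norm_div, norm_pow, Complex.norm_real, Real.norm_eq_abs, _root_.abs_of_nonneg hs0.le]
    exact div_le_self (norm_nonneg _) (one_le_pow₀ hs)
  have h2 : ‖partialFar κ f m s‖ = Real.sqrt (2 / (Real.pi * κ * s)) *
      ‖∑ j ∈ Finset.range (m+1), f j / (s : ℂ) ^ j‖ := by
    rw [partialFar, norm_mul, norm_mul, Complex.norm_real, Real.norm_eq_abs,
      _root_.abs_of_nonneg (Real.sqrt_nonneg _), norm_exp_I_real, mul_one]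
  rw [h2, sqrt_coeff κ hκ s]
  have h3 : Real.sqrt (2/(Real.pi*κ)) / Real.sqrt s
      = Real.sqrt (2/(Real.pi*κ)) * s ^ (-(1:ℝ)/2) := by
    have hinv : s ^ (-(1:ℝ)/2) = (Real.sqrt s)⁻¹ := by
      rw [Real.sqrt_eq_rpow, ← Real.rpow_neg hs0.le]
      norm_num
    rw [hinv, div_eq_mul_inv]
  rw [h3]
  calc Real.sqrt (2/(Real.pi*κ)) * s ^ (-(1:ℝ)/2) * ‖∑ j ∈ Finset.range (m+1), f j / (s:ℂ)^j‖
      ≤ Real.sqrt (2/(Real.pi*κ)) * s ^ (-(1:ℝ)/2) * ∑ j ∈ Finset.range (m+1), ‖f j‖ := by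
        apply mul_le_mul_of_nonneg_left h1 (by positivity)
    _ = (Real.sqrt (2/(Real.pi*κ)) * ∑ j ∈ Finset.range (m+1), ‖f j‖) * s ^ (-(1:ℝ)/2) := by ring

lemma partialFar_isBigO (κ : ℝ) (hκ : 0 < κ) (f : ℕ → ℂ) (m : ℕ) :
    partialFar κ f m =O[atTop] fun s : ℝ => s ^ (-(1:ℝ)/2) := by
  apply IsBigO.of_bound (Real.sqrt (2/(Real.pi*κ)) * ∑ j ∈ Finset.range (m+1), ‖f j‖)
  filter_upwards [eventually_ge_atTop 1] with s hs
  rw [Real.norm_eq_abs, _root_.abs_of_nonneg (Real.rpow_nonneg (by linarith) _)]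
  exact partialFar_norm_le κ hκ f m hs

lemma tail_eq (κ : ℝ) (f : ℕ → ℂ) (n : ℕ) (s : ℝ) :
    tailF κ f n s =
      (Real.sqrt (2 / (Real.pi * κ * s)) : ℂ) *
        Complex.exp (Complex.I * ((κ * s - Real.pi / 4 : ℝ) : ℂ)) *
        (f (n+1) / (s : ℂ) ^ (n+1)) := by
  rw [tailF, partialFar, partialFar, Finset.sum_range_succ]
  ring

lemma tail_isBigO (κ : ℝ) (hκ : 0 < κ) (f : ℕ → ℂ) (n : ℕ) :
    (fun s : ℝ => tailF κ f n s) =O[atTop] fun s : ℝ => s ^ (-(n:ℝ) - 3/2) := by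
  apply IsBigO.of_bound (Real.sqrt (2/(Real.pi*κ)) * ‖f (n+1)‖)
  filter_upwards [eventually_ge_atTop 1] with s hs
  have hs0 : (0:ℝ) < s := by linarith
  have h1 : ‖tailF κ f n s‖ = Real.sqrt (2 / (Real.pi * κ * s)) * (‖f (n+1)‖ / s ^ (n+1)) := by
    rw [tail_eq, norm_mul, norm_mul, Complex.norm_real, Real.norm_eq_abs,
      _root_.abs_of_nonneg (Real.sqrt_nonneg _), norm_exp_I_real, mul_one, norm_div, norm_pow,
      Complex.norm_real, Real.norm_eq_abs, _root_.abs_of_nonneg hs0.le]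
  have h2 : s ^ (-(n:ℝ) - 3/2) = s ^ (-(1:ℝ)/2) * (s ^ (n+1) : ℝ)⁻¹ := by
    rw [← Real.rpow_natCast s (n+1), ← Real.rpow_neg hs0.le, ← Real.rpow_add hs0]
    congr 1
    push_cast
    ring
  rw [h1, sqrt_coeff κ hκ s, Real.norm_eq_abs,
    _root_.abs_of_nonneg (Real.rpow_nonneg hs0.le _), h2]
  have hinv : Real.sqrt (2/(Real.pi*κ)) / Real.sqrt s
      = Real.sqrt (2/(Real.pi*κ)) * s ^ (-(1:ℝ)/2) := by
    have : s ^ (-(1:ℝ)/2) = (Real.sqrt s)⁻¹ := by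
      rw [Real.sqrt_eq_rpow, ← Real.rpow_neg hs0.le]
      norm_num
    rw [this, div_eq_mul_inv]
  rw [hinv, div_eq_mul_inv]
  apply le_of_eq
  ring

lemma conj_I_real (x : ℝ) : (starRingEnd ℂ) (Complex.I * (x:ℂ)) = -(Complex.I * (x:ℂ)) := by
  simp [map_mul, Complex.conj_I, Complex.conj_ofReal]

lemma cancel_alg (S P A X Y g f' : ℂ) (hS : S ≠ 0) (hP : P ≠ 0) (hX : X ≠ 0) (hY : Y ≠ 0) :
    P * (S * (Y * (A/S * X⁻¹ * (g/P)) + Y⁻¹ * (A/S * X * (f'/P)))) = A * (X*Y⁻¹*f' + Y*X⁻¹*g) := by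
  field_simp
  ring

set_option maxHeartbeats 1000000 in
lemma osc_eq (κ : ℝ) (hκ : 0 < κ) (c : ℝ) (f : ℕ → ℂ) (n : ℕ) {s : ℝ} (hs : 0 < s) :
    (s:ℂ)^(n+1) * ((Real.sqrt s * (2*(uu c s * (starRingEnd ℂ) (tailF κ f n s)).re) : ℝ) : ℂ)
      = oscTerm κ c (f (n+1)) s := by
  have hX : Complex.exp (Complex.I * ((κ * s - Real.pi / 4 : ℝ) : ℂ)) ≠ 0 := Complex.exp_ne_zero _
  have hY : Complex.exp (Complex.I * ((s * c : ℝ) : ℂ)) ≠ 0 := Complex.exp_ne_zero _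
  have hs0 : ((Real.sqrt s : ℝ) : ℂ) ≠ 0 := by
    simp [Real.sqrt_eq_zero', hs, hs.le, not_le, hs.ne']
  have hsc : ((s:ℝ):ℂ) ≠ 0 := by exact_mod_cast hs.ne'
  set X := Complex.exp (Complex.I * ((κ * s - Real.pi / 4 : ℝ) : ℂ)) with hXdef
  set Y := Complex.exp (Complex.I * ((s * c : ℝ) : ℂ)) with hYdef
  have hconjX : (starRingEnd ℂ) X = X⁻¹ := by
    rw [hXdef, ← Complex.exp_conj, conj_I_real, Complex.exp_neg]
  have hconjt : (starRingEnd ℂ) (tailF κ f n s) =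
      (Real.sqrt (2 / (Real.pi * κ * s)) : ℂ) * X⁻¹ *
        ((starRingEnd ℂ) (f (n+1)) / (s : ℂ) ^ (n+1)) := by
    rw [tail_eq, map_mul, map_mul, map_div₀, map_pow, Complex.conj_ofReal,
      Complex.conj_ofReal, hconjX]
  have he1 : Complex.exp (Complex.I * ((κ * s - s * c - Real.pi / 4 : ℝ) : ℂ)) = X * Y⁻¹ := by
    rw [hXdef, hYdef, ← Complex.exp_neg, ← Complex.exp_add]
    congr 1
    push_cast
    ring
  have he2 : Complex.exp (-(Complex.I * ((κ * s - s * c - Real.pi / 4 : ℝ) : ℂ))) = Y * X⁻¹ := by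
    rw [Complex.exp_neg, he1, mul_inv_rev, inv_inv]
  have hw : ((2*(uu c s * (starRingEnd ℂ) (tailF κ f n s)).re : ℝ) : ℂ)
      = uu c s * (starRingEnd ℂ) (tailF κ f n s)
        + (starRingEnd ℂ) (uu c s * (starRingEnd ℂ) (tailF κ f n s)) := by
    rw [Complex.add_conj]
  have hconjw : (starRingEnd ℂ) (uu c s * (starRingEnd ℂ) (tailF κ f n s))
      = Y⁻¹ * tailF κ f n s := by
    rw [map_mul, Complex.conj_conj, uu, ← Complex.exp_conj, conj_I_real, Complex.exp_neg, hYdef]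
  have husc : uu c s = Y := rfl
  rw [oscTerm, he1, he2, Complex.ofReal_mul, hw, hconjw, husc, hconjt, tail_eq,
    sqrt_coeff κ hκ]
  rw [← hXdef]
  have hp : ((s:ℝ):ℂ)^(n+1) ≠ 0 := pow_ne_zero _ hsc
  simp only [Complex.ofReal_div]
  exact cancel_alg ((Real.sqrt s : ℝ) : ℂ) ((s:ℂ)^(n+1)) ((Real.sqrt (2/(Real.pi*κ)) : ℝ) : ℂ)
    X Y ((starRingEnd ℂ) (f (n+1))) (f (n+1)) hs0 hp hX hY

lemma main_eq (κ : ℝ) (hκ : 0 < κ) (c : ℝ) (n : ℕ) (f : ℕ → ℂ) (ψ₁ : ℝ → ℂ) {s : ℝ}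
    (hs : 0 < s) :
    (s:ℂ)^(n+1) * (intensityDev c ψ₁ s - intensityDev c (partialFar κ f n) s) -
        oscTerm κ c (f (n+1)) s
      = (s:ℂ)^(n+1) * ((Real.sqrt s * remF κ c f n ψ₁ s : ℝ) : ℂ) := by
  have habs : ‖uu c s + ψ₁ s‖^2 - ‖uu c s + partialFar κ f n s‖^2
      = 2*(uu c s * (starRingEnd ℂ) (tailF κ f n s)).re + remF κ c f n ψ₁ s := by
    rw [Complex.sq_norm, Complex.sq_norm]
    have hsplit : ψ₁ s = partialFar κ f n s + tailF κ f n s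
        + (ψ₁ s - partialFar κ f (n+1) s) := by
      rw [tailF]; ring
    have hbt : partialFar κ f n s + tailF κ f n s = partialFar κ f (n+1) s := by
      rw [tailF]; ring
    conv_lhs => rw [hsplit]
    rw [key_normSq, hbt, remF]
  have hdiff : intensityDev c ψ₁ s - intensityDev c (partialFar κ f n) s
      = ((Real.sqrt s * (2*(uu c s * (starRingEnd ℂ) (tailF κ f n s)).re
          + remF κ c f n ψ₁ s) : ℝ) : ℂ) := by
    rw [intensityDev, intensityDev, ← Complex.ofReal_sub]
    congr 1
    have hu : Complex.exp (Complex.I * ((s * c : ℝ) : ℂ)) = uu c s := rfl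
    rw [hu, ← habs]
    ring
  rw [hdiff, ← osc_eq κ hκ c f n hs]
  push_cast
  ring

/-- Formula (4.8): the induction step for recovering the far-field coefficients from the
intensity of the total field along a ray. -/
theorem intensity_deviation_induction_step
    (κ : ℝ) (hκ : 0 < κ) (k θ : E2) (hk : ‖k‖ = κ) (hθ : ‖θ‖ = 1)
    (n : ℕ) (f : ℕ → ℂ) (ψ₁ : ℝ → ℂ)
    (hψ : (fun s : ℝ => ψ₁ s - partialFar κ f (n + 1) s) =O[atTop]
      fun s : ℝ => s ^ (-(n : ℝ) - 5 / 2)) :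
    (fun s : ℝ =>
        (s : ℂ) ^ (n + 1) *
            (intensityDev ⟪k, θ⟫ ψ₁ s - intensityDev ⟪k, θ⟫ (partialFar κ f n) s) -
          oscTerm κ ⟪k, θ⟫ (f (n + 1)) s)
      =O[atTop] fun s : ℝ => s ^ (-(1 : ℝ) / 2) := by
  set c : ℝ := ⟪k, θ⟫ with hc
  have hre : ∀ (g : ℝ → ℂ) (a : ℝ), g =O[atTop] (fun s : ℝ => s ^ a) →
      (fun s => (g s).re) =O[atTop] fun s : ℝ => s ^ a := fun g a hg =>
    (isBigO_of_le _ fun s => by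
      rw [Real.norm_eq_abs]; exact Complex.abs_re_le_norm _).trans hg
  have hconj : ∀ (g : ℝ → ℂ) (a : ℝ), g =O[atTop] (fun s : ℝ => s ^ a) →
      (fun s => (starRingEnd ℂ) (g s)) =O[atTop] fun s : ℝ => s ^ a := fun g a hg =>
    (isBigO_of_le _ fun s => by
      rw [Complex.norm_conj]).trans hg
  -- the five pieces of remF
  have hrc := hconj _ _ hψ
  have htail := tail_isBigO κ hκ f n
  have htc := hconj _ _ htail
  have h1 : (fun s : ℝ => 2*(uu c s * (starRingEnd ℂ) (ψ₁ s - partialFar κ f (n+1) s)).re)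
      =O[atTop] fun s : ℝ => s ^ (-(n:ℝ) - 5/2) := by
    refine IsBigO.const_mul_left (hre _ _ ?_) 2
    refine (isBigO_of_le _ fun s => ?_).trans hψ
    rw [norm_mul, uu, norm_exp_I_real, one_mul, Complex.norm_conj]
  have h2 : (fun s : ℝ =>
        2*(partialFar κ f (n+1) s * (starRingEnd ℂ) (ψ₁ s - partialFar κ f (n+1) s)).re)
      =O[atTop] fun s : ℝ => s ^ (-(1:ℝ)/2 + (-(n:ℝ) - 5/2)) := by
    refine IsBigO.const_mul_left (hre _ _ ?_) 2
    exact ((partialFar_isBigO κ hκ f (n+1)).mul hrc).trans_eventuallyEq (rpow_mul_ev _ _)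
  have h3 : (fun s : ℝ => Complex.normSq (ψ₁ s - partialFar κ f (n+1) s))
      =O[atTop] fun s : ℝ => s ^ ((-(n:ℝ) - 5/2) + (-(n:ℝ) - 5/2)) := by
    refine ((hψ.norm_left.mul hψ.norm_left).trans_eventuallyEq (rpow_mul_ev _ _)).congr_left
      fun s => ?_
    rw [Complex.normSq_eq_norm_sq, sq]
  have h4 : (fun s : ℝ => Complex.normSq (tailF κ f n s))
      =O[atTop] fun s : ℝ => s ^ ((-(n:ℝ) - 3/2) + (-(n:ℝ) - 3/2)) := by
    refine ((htail.norm_left.mul htail.norm_left).trans_eventuallyEq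
      (rpow_mul_ev _ _)).congr_left fun s => ?_
    rw [Complex.normSq_eq_norm_sq, sq]
  have h5 : (fun s : ℝ => 2*(partialFar κ f n s * (starRingEnd ℂ) (tailF κ f n s)).re)
      =O[atTop] fun s : ℝ => s ^ (-(1:ℝ)/2 + (-(n:ℝ) - 3/2)) := by
    refine IsBigO.const_mul_left (hre _ _ ?_) 2
    exact ((partialFar_isBigO κ hκ f n).mul htc).trans_eventuallyEq (rpow_mul_ev _ _)
  have H1 := aux_bigO (n+1) _ _ h1 (by push_cast; linarith)
  have H2 := aux_bigO (n+1) _ _ h2 (by push_cast; linarith)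
  have H3 := aux_bigO (n+1) _ _ h3
    (by push_cast; have hn : (0:ℝ) ≤ (n:ℝ) := Nat.cast_nonneg n; linarith)
  have H4 := aux_bigO (n+1) _ _ h4
    (by push_cast; have hn : (0:ℝ) ≤ (n:ℝ) := Nat.cast_nonneg n; linarith)
  have H5 := aux_bigO (n+1) _ _ h5 (by push_cast; linarith)
  have hsum := (((H1.add H2).add H3).add H4).add H5
  have heq : (fun s : ℝ =>
        (s : ℂ) ^ (n + 1) *
            (intensityDev c ψ₁ s - intensityDev c (partialFar κ f n) s) -
          oscTerm κ c (f (n + 1)) s)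
      =ᶠ[atTop] fun s : ℝ => (s:ℂ)^(n+1) * ((Real.sqrt s * remF κ c f n ψ₁ s : ℝ) : ℂ) := by
    filter_upwards [eventually_gt_atTop 0] with s hs
    exact main_eq κ hκ c n f ψ₁ hs
  refine heq.trans_isBigO (hsum.congr_left fun s => ?_)
  rw [remF]
  push_cast
  ring
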